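/- Let p ∈ [1,2]. For each positive integer k set j_k = 2^{k(k-1)}, and suppose that for each k, H_k is a j_k × j_k real matrix whose entries all have absolute value 1 and whose rows are pairwise orthogonal (equivalently, ∑_{s=1}^{j_k} (H_k)_{rs}(H_k)_{ts} = j_k·δ_{rt}). Define the sequence (x^{(j)})_{j≥1} in the real space ℓ_p by: if j_k ≤ j ≤ 2j_k − 1 for some (necessarily unique) positive integer k, then x^{(j)} = j_k^{−(1/2 + 1/p + 1/k)} · ∑_{s=1}^{j_k} (H_k)_{rs} · e_{j_k + s − 1}, where r = j − j_k + 1; otherwise x^{(j)} = 0. Then the series ∑_j x^{(j)} is unconditionally summable in ℓ_p(ℝ) (the family is summable), and for every ε > 0 one has ∑_{j=1}^∞ ‖x^{(j)}‖_p^{2−ε} = ∞. -/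

import Mathlib

open scoped ENNReal Real

open Finset

private lemma jensen_rpow (F : Finset ℕ) (a : ℕ → ℝ) (ha : ∀ i ∈ F, 0 ≤ a i)
    {q : ℝ} (hq0 : 0 < q) (hq1 : q ≤ 1) :
    ∑ i ∈ F, a i ^ q ≤ (F.card : ℝ) ^ (1 - q) * (∑ i ∈ F, a i) ^ q := by
  rcases F.eq_empty_or_nonempty with rfl | hF
  · simp [Real.zero_rpow hq0.ne']
  have hn : (0:ℝ) < F.card := by exact_mod_cast Finset.card_pos.2 hF
  have hp : (1:ℝ) ≤ q⁻¹ := (one_le_inv₀ hq0).2 hq1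
  have key := Real.arith_mean_le_rpow_mean F (fun _ => (F.card : ℝ)⁻¹)
      (fun i => a i ^ q) (fun i _ => by positivity)
      (by simp [Finset.sum_const, hn.ne']) (fun i hi => Real.rpow_nonneg (ha i hi) q) hp
  simp only [← Finset.mul_sum, one_div, inv_inv] at key
  have hz : ∑ i ∈ F, (a i ^ q) ^ q⁻¹ = ∑ i ∈ F, a i :=
    Finset.sum_congr rfl (fun i hi => Real.rpow_rpow_inv (ha i hi) hq0.ne')
  rw [hz] at key
  have h2 : ((F.card : ℝ)⁻¹ * ∑ i ∈ F, a i) ^ q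
      = (F.card : ℝ)⁻¹ ^ q * (∑ i ∈ F, a i) ^ q :=
    Real.mul_rpow (by positivity) (Finset.sum_nonneg ha)
  rw [h2] at key
  have key2 := mul_le_mul_of_nonneg_left key (le_of_lt hn)
  rw [← mul_assoc, ← mul_assoc, mul_inv_cancel₀ hn.ne', one_mul] at key2
  have h3 : (F.card : ℝ) * ((F.card : ℝ)⁻¹) ^ q = (F.card : ℝ) ^ (1 - q) := by
    rw [Real.inv_rpow hn.le, ← Real.rpow_neg hn.le]
    nth_rewrite 1 [← Real.rpow_one (F.card:ℝ)]
    rw [← Real.rpow_add hn]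
    ring_nf
  rwa [h3] at key2


private lemma normsum (p : ℝ≥0∞) [Fact (1 ≤ p)] (hq0 : 0 < p.toReal)
    (J : ℕ) (g : ℕ → ℝ) :
    ‖∑ s ∈ Finset.Icc 1 J, (lp.single p (J + s - 1) (g s) : lp (fun _ : ℕ => ℝ) p)‖ ^ p.toReal
      = ∑ s ∈ Finset.Icc 1 J, |g s| ^ p.toReal := by
  classical
  set G : ℕ → ℝ := fun i => g (i - J + 1) with hG
  have hinj : ∀ s ∈ Finset.Icc 1 J, ∀ t ∈ Finset.Icc 1 J,
      J + s - 1 = J + t - 1 → s = t := by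
    intro s hs t ht h
    simp only [Finset.mem_Icc] at hs ht
    omega
  have hGe : ∀ s ∈ Finset.Icc 1 J, G (J + s - 1) = g s := by
    intro s hs
    simp only [Finset.mem_Icc] at hs
    have h1 : J + s - 1 - J + 1 = s := by omega
    simp [hG, h1]
  have h1 : ∑ s ∈ Finset.Icc 1 J, lp.single p (J + s - 1) (g s)
      = ∑ i ∈ (Finset.Icc 1 J).image (fun s => J + s - 1), (lp.single p i (G i) : lp (fun _ : ℕ => ℝ) p) := by
    rw [Finset.sum_image hinj]
    exact Finset.sum_congr rfl fun s hs => by rw [hGe s hs]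
  have h2 : ∑ s ∈ Finset.Icc 1 J, |g s| ^ p.toReal
      = ∑ i ∈ (Finset.Icc 1 J).image (fun s => J + s - 1), ‖G i‖ ^ p.toReal := by
    rw [Finset.sum_image hinj]
    exact Finset.sum_congr rfl fun s hs => by rw [hGe s hs, Real.norm_eq_abs]
  rw [h1, h2, lp.norm_sum_single hq0]

private lemma geom_tail (S : Finset ℕ) (K : ℕ) (hS : ∀ k ∈ S, K ≤ k) :
    ∑ k ∈ S, ((2:ℝ)⁻¹) ^ k ≤ 2 * (2⁻¹) ^ K := by
  have hinj : ∀ a ∈ S, ∀ b ∈ S, a - K = b - K → a = b := by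
    intro a ha b hb h; have := hS a ha; have := hS b hb; omega
  have h1 : ∑ k ∈ S, ((2:ℝ)⁻¹) ^ k = ∑ m ∈ S.image (· - K), ((2:ℝ)⁻¹) ^ (m + K) := by
    rw [Finset.sum_image hinj]
    exact Finset.sum_congr rfl fun k hk => by rw [Nat.sub_add_cancel (hS k hk)]
  rw [h1]
  have hsummable : Summable (fun m : ℕ => ((2:ℝ)⁻¹) ^ (m + K)) := by
    simp_rw [pow_add]
    exact (summable_geometric_of_lt_one (by norm_num) (by norm_num)).mul_right _
  calc ∑ m ∈ S.image (· - K), ((2:ℝ)⁻¹) ^ (m + K)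
      ≤ ∑' m : ℕ, ((2:ℝ)⁻¹) ^ (m + K) :=
        hsummable.sum_le_tsum _ (fun m _ => by positivity)
    _ = 2 * (2⁻¹) ^ K := by
        simp_rw [pow_add]
        rw [tsum_mul_right, tsum_geometric_of_lt_one (by norm_num) (by norm_num)]
        norm_num [mul_comm]


private lemma single_sum (p : ℝ≥0∞) [Fact (1 ≤ p)] (i : ℕ) (t : Finset ℕ) (f : ℕ → ℝ) :
    ∑ j ∈ t, (lp.single p i (f j) : lp (fun _ : ℕ => ℝ) p) = lp.single p i (∑ j ∈ t, f j) := by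
  apply lp.ext
  funext m
  simp only [lp.coeFn_sum, Finset.sum_apply, lp.single_apply]
  by_cases hm : m = i
  · subst hm; simp
  · simp [hm]

private lemma rep (p : ℝ≥0∞) [Fact (1 ≤ p)]
    (H : ℕ → ℕ → ℕ → ℝ) (x : ℕ → lp (fun _ : ℕ => ℝ) p)
    (hx : ∀ k : ℕ, 0 < k → ∀ j : ℕ,
      2 ^ (k * (k - 1)) ≤ j → j ≤ 2 * 2 ^ (k * (k - 1)) - 1 →
      x j = ((2 ^ (k * (k - 1)) : ℝ) ^ (-(1 / 2 + 1 / p.toReal + 1 / (k : ℝ)))) •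
        ∑ s ∈ Finset.Icc 1 (2 ^ (k * (k - 1))),
          H k (j - 2 ^ (k * (k - 1)) + 1) s •
            lp.single p (2 ^ (k * (k - 1)) + s - 1) (1 : ℝ))
    (k : ℕ) (hk : 0 < k) (t : Finset ℕ)
    (ht : ∀ j ∈ t, 2 ^ (k * (k - 1)) ≤ j ∧ j ≤ 2 * 2 ^ (k * (k - 1)) - 1) :
    ∑ j ∈ t, x j = ∑ s ∈ Finset.Icc 1 (2 ^ (k * (k - 1))),
      lp.single p (2 ^ (k * (k - 1)) + s - 1)
        (((2 ^ (k * (k - 1)) : ℝ) ^ (-(1 / 2 + 1 / p.toReal + 1 / (k : ℝ)))) *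
          ∑ j ∈ t, H k (j - 2 ^ (k * (k - 1)) + 1) s) := by
  set c : ℝ := ((2 ^ (k * (k - 1)) : ℝ) ^ (-(1 / 2 + 1 / p.toReal + 1 / (k : ℝ)))) with hc
  have e1 : ∀ j ∈ t, x j = ∑ s ∈ Finset.Icc 1 (2 ^ (k * (k - 1))),
      lp.single p (2 ^ (k * (k - 1)) + s - 1) (c * H k (j - 2 ^ (k * (k - 1)) + 1) s) := by
    intro j hj
    rw [hx k hk j (ht j hj).1 (ht j hj).2, Finset.smul_sum]
    refine Finset.sum_congr rfl fun s hs => ?_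
    rw [smul_smul, ← lp.single_smul, smul_eq_mul, mul_one]
  rw [Finset.sum_congr rfl e1, Finset.sum_comm]
  refine Finset.sum_congr rfl fun s hs => ?_
  rw [single_sum, Finset.mul_sum]

private lemma ortho
    (H : ℕ → ℕ → ℕ → ℝ) (k : ℕ) (hk : 0 < k)
    (hHorth : ∀ r t : ℕ,
      1 ≤ r → r ≤ 2 ^ (k * (k - 1)) → 1 ≤ t → t ≤ 2 ^ (k * (k - 1)) →
      ∑ s ∈ Finset.Icc 1 (2 ^ (k * (k - 1))), H k r s * H k t s =
        if r = t then (2 ^ (k * (k - 1)) : ℝ) else 0)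
    (t : Finset ℕ)
    (ht : ∀ j ∈ t, 2 ^ (k * (k - 1)) ≤ j ∧ j ≤ 2 * 2 ^ (k * (k - 1)) - 1) :
    ∑ s ∈ Finset.Icc 1 (2 ^ (k * (k - 1))),
      (∑ j ∈ t, H k (j - 2 ^ (k * (k - 1)) + 1) s) ^ 2
      = (t.card : ℝ) * (2 ^ (k * (k - 1)) : ℝ) := by
  classical
  have hJ1 : 1 ≤ 2 ^ (k * (k - 1)) := Nat.one_le_two_pow
  have hr : ∀ j ∈ t, 1 ≤ j - 2 ^ (k * (k - 1)) + 1 ∧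
      j - 2 ^ (k * (k - 1)) + 1 ≤ 2 ^ (k * (k - 1)) := by
    intro j hj; have := ht j hj; omega
  have step1 : ∀ s : ℕ, (∑ j ∈ t, H k (j - 2 ^ (k * (k - 1)) + 1) s) ^ 2
      = ∑ j ∈ t, ∑ j' ∈ t, H k (j - 2 ^ (k * (k - 1)) + 1) s *
          H k (j' - 2 ^ (k * (k - 1)) + 1) s := by
    intro s; rw [sq, Finset.sum_mul_sum]
  simp_rw [step1]
  rw [Finset.sum_comm]
  have step2 : ∀ j ∈ t, ∑ s ∈ Finset.Icc 1 (2 ^ (k * (k - 1))), ∑ j' ∈ t,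
      H k (j - 2 ^ (k * (k - 1)) + 1) s * H k (j' - 2 ^ (k * (k - 1)) + 1) s
      = (2 ^ (k * (k - 1)) : ℝ) := by
    intro j hj
    rw [Finset.sum_comm]
    have inner : ∀ j' ∈ t, ∑ s ∈ Finset.Icc 1 (2 ^ (k * (k - 1))),
        H k (j - 2 ^ (k * (k - 1)) + 1) s * H k (j' - 2 ^ (k * (k - 1)) + 1) s
        = if j = j' then (2 ^ (k * (k - 1)) : ℝ) else 0 := by
      intro j' hj'
      rw [hHorth _ _ (hr j hj).1 (hr j hj).2 (hr j' hj').1 (hr j' hj').2]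
      congr 1
      have h1 := ht j hj; have h2 := ht j' hj'
      simp only [eq_iff_iff]
      constructor <;> intro h <;> omega
    rw [Finset.sum_congr rfl inner, Finset.sum_ite_eq t j
      (fun _ => (2 ^ (k * (k - 1)) : ℝ)), if_pos hj]
  rw [Finset.sum_congr rfl step2, Finset.sum_const, nsmul_eq_mul]


private lemma gap (k : ℕ) (hk : 0 < k) :
    2 * 2 ^ (k * (k - 1)) - 1 < 2 ^ ((k+1) * ((k+1) - 1)) := by
  rcases Nat.exists_eq_succ_of_ne_zero hk.ne' with ⟨m, rfl⟩
  have he : (m + 1 + 1) * (m + 1 + 1 - 1) = (m+1) * ((m+1) - 1) + 2 * (m + 1) := by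
    simp only [Nat.add_sub_cancel]
    ring
  rw [he, pow_add]
  have hA : 1 ≤ 2 ^ ((m+1) * ((m+1) - 1)) := Nat.one_le_two_pow
  have hB : 4 ≤ 2 ^ (2 * (m + 1)) := by
    calc (4:ℕ) = 2 ^ 2 := by norm_num
      _ ≤ 2 ^ (2 * (m+1)) := Nat.pow_le_pow_right (by norm_num) (by omega)
  calc 2 * 2 ^ ((m+1) * ((m+1) - 1)) - 1 < 2 * 2 ^ ((m+1) * ((m+1) - 1)) := by omega
    _ ≤ 2 ^ ((m+1) * ((m+1) - 1)) * 4 := by omega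
    _ ≤ 2 ^ ((m+1) * ((m+1) - 1)) * 2 ^ (2 * (m+1)) :=
        Nat.mul_le_mul_left _ hB

private lemma Jmono {k l : ℕ} (h : k ≤ l) : (2:ℕ) ^ (k * (k - 1)) ≤ 2 ^ (l * (l - 1)) :=
  Nat.pow_le_pow_right (by norm_num) (Nat.mul_le_mul h (by omega))

lemma two_pow_pred_ge (k : ℕ) : k ≤ 2 ^ (k - 1) := by
  rcases Nat.eq_zero_or_pos k with rfl | hk
  · simp
  · have := Nat.lt_two_pow_self (n := k - 1)
    omega

section
variable (p : ℝ≥0∞) [Fact (1 ≤ p)]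

private lemma keybound (hp2 : p ≤ 2)
    (H : ℕ → ℕ → ℕ → ℝ) (x : ℕ → lp (fun _ : ℕ => ℝ) p)
    (hx : ∀ k : ℕ, 0 < k → ∀ j : ℕ,
      2 ^ (k * (k - 1)) ≤ j → j ≤ 2 * 2 ^ (k * (k - 1)) - 1 →
      x j = ((2 ^ (k * (k - 1)) : ℝ) ^ (-(1 / 2 + 1 / p.toReal + 1 / (k : ℝ)))) •
        ∑ s ∈ Finset.Icc 1 (2 ^ (k * (k - 1))),
          H k (j - 2 ^ (k * (k - 1)) + 1) s •
            lp.single p (2 ^ (k * (k - 1)) + s - 1) (1 : ℝ))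
    (k : ℕ) (hk : 0 < k)
    (hHorth : ∀ r t : ℕ,
      1 ≤ r → r ≤ 2 ^ (k * (k - 1)) → 1 ≤ t → t ≤ 2 ^ (k * (k - 1)) →
      ∑ s ∈ Finset.Icc 1 (2 ^ (k * (k - 1))), H k r s * H k t s =
        if r = t then (2 ^ (k * (k - 1)) : ℝ) else 0)
    (t : Finset ℕ)
    (ht : ∀ j ∈ t, 2 ^ (k * (k - 1)) ≤ j ∧ j ≤ 2 * 2 ^ (k * (k - 1)) - 1) :
    ‖∑ j ∈ t, x j‖ ≤ ((2:ℝ)⁻¹) ^ (k - 1) := by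
  classical
  have hptop : p ≠ ∞ := ne_top_of_le_ne_top (by norm_num) hp2
  have hq1 : 1 ≤ p.toReal := by
    rw [← ENNReal.toReal_one]
    exact (ENNReal.toReal_le_toReal (by norm_num) hptop).2 Fact.out
  have hq2 : p.toReal ≤ 2 := by
    rw [← ENNReal.toReal_ofNat 2]
    exact (ENNReal.toReal_le_toReal hptop (by norm_num)).2 hp2
  have hq0 : 0 < p.toReal := lt_of_lt_of_le one_pos hq1
  set q := p.toReal with hqdef
  set J : ℕ := 2 ^ (k * (k - 1)) with hJ
  have hJ1 : 1 ≤ J := Nat.one_le_two_pow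
  have hJrc : ((J : ℕ) : ℝ) = (2 ^ (k * (k - 1)) : ℝ) := by push_cast [hJ]; ring
  set Jr : ℝ := (2 ^ (k * (k - 1)) : ℝ) with hJrdef
  have hJr0 : (0:ℝ) < Jr := by positivity
  have hk0 : ((k:ℝ)) ≠ 0 := Nat.cast_ne_zero.2 hk.ne'
  set α : ℝ := 1/2 + 1/q + 1/(k:ℝ) with hα
  set c : ℝ := Jr ^ (-α) with hc
  have hc0 : 0 < c := Real.rpow_pos_of_pos hJr0 _
  set cs : ℕ → ℝ := fun s => ∑ j ∈ t, H k (j - J + 1) s with hcs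
  -- step 1: the norm identity
  have h1 : ‖∑ j ∈ t, x j‖ ^ q = ∑ s ∈ Finset.Icc 1 J, |c * cs s| ^ q := by
    rw [rep p H x hx k hk t ht]
    exact normsum p hq0 J (fun s => c * cs s)
  -- step 2: pull out c
  have h2 : ∑ s ∈ Finset.Icc 1 J, |c * cs s| ^ q
      = c ^ q * ∑ s ∈ Finset.Icc 1 J, |cs s| ^ q := by
    rw [Finset.mul_sum]
    refine Finset.sum_congr rfl fun s _ => ?_
    rw [abs_mul, Real.mul_rpow (abs_nonneg _) (abs_nonneg _), abs_of_pos hc0]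
  -- step 3: |y|^q = (y^2)^(q/2)
  have h3 : ∀ y : ℝ, |y| ^ q = (y ^ 2) ^ (q/2) := by
    intro y
    rw [← sq_abs, ← Real.rpow_natCast |y| 2, ← Real.rpow_mul (abs_nonneg y)]
    norm_num [mul_div_cancel₀]
  -- step 4: Jensen + orthogonality
  have h4 : ∑ s ∈ Finset.Icc 1 J, |cs s| ^ q ≤ Jr ^ (1 - q/2) * (Jr * Jr) ^ (q/2) := by
    have hcard : ((Finset.Icc 1 J).card : ℝ) = Jr := by
      rw [Nat.card_Icc]; simp [hJrc.symm]
    have hj := jensen_rpow (Finset.Icc 1 J) (fun s => cs s ^ 2)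
      (fun s _ => sq_nonneg _) (q := q/2) (by positivity) (by linarith)
    rw [hcard] at hj
    have horth : ∑ s ∈ Finset.Icc 1 J, cs s ^ 2 = (t.card : ℝ) * Jr :=
      ortho H k hk hHorth t ht
    have hcardt : (t.card : ℝ) ≤ Jr := by
      have hsub : t ⊆ Finset.Icc J (2 * J - 1) := by
        intro j hj'; rw [Finset.mem_Icc]; exact ht j hj'
      have := Finset.card_le_card hsub
      have hIcc : (Finset.Icc J (2 * J - 1)).card = J := by
        rw [Nat.card_Icc]; omega
      rw [hIcc] at this
      rw [← hJrc]; exact_mod_cast this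
    calc ∑ s ∈ Finset.Icc 1 J, |cs s| ^ q
        = ∑ s ∈ Finset.Icc 1 J, (cs s ^ 2) ^ (q/2) :=
          Finset.sum_congr rfl fun s _ => h3 (cs s)
      _ ≤ Jr ^ (1 - q/2) * (∑ s ∈ Finset.Icc 1 J, cs s ^ 2) ^ (q/2) := hj
      _ = Jr ^ (1 - q/2) * ((t.card : ℝ) * Jr) ^ (q/2) := by rw [horth]
      _ ≤ Jr ^ (1 - q/2) * (Jr * Jr) ^ (q/2) := by
          apply mul_le_mul_of_nonneg_left _ (Real.rpow_nonneg hJr0.le _)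
          apply Real.rpow_le_rpow (by positivity) _ (by positivity)
          exact mul_le_mul_of_nonneg_right hcardt hJr0.le
  -- step 5: exponent arithmetic
  have h2r : Jr * Jr = Jr ^ (2:ℝ) := by
    rw [show (2:ℝ) = ((2:ℕ):ℝ) by norm_num, Real.rpow_natCast, sq]
  have h5 : c ^ q * (Jr ^ (1 - q/2) * (Jr * Jr) ^ (q/2)) = (Jr ^ (-(1:ℝ)/(k:ℝ))) ^ q := by
    rw [hc, h2r]
    simp only [← Real.rpow_mul hJr0.le, ← Real.rpow_add hJr0]
    congr 1
    rw [hα]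
    field_simp
    ring
  have h6 : ‖∑ j ∈ t, x j‖ ^ q ≤ (Jr ^ (-(1:ℝ)/(k:ℝ))) ^ q := by
    rw [h1, h2, ← h5]
    exact mul_le_mul_of_nonneg_left h4 (by positivity)
  have h7 : ‖∑ j ∈ t, x j‖ ≤ Jr ^ (-(1:ℝ)/(k:ℝ)) :=
    (Real.rpow_le_rpow_iff (norm_nonneg _) (Real.rpow_pos_of_pos hJr0 _).le hq0).1 h6
  have h8 : Jr ^ (-(1:ℝ)/(k:ℝ)) = ((2:ℝ)⁻¹) ^ (k - 1) := by
    rw [hJrdef, ← Real.rpow_natCast (2:ℝ) (k * (k - 1)),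
      ← Real.rpow_mul (by norm_num : (0:ℝ) ≤ 2)]
    have hexp : ((k * (k - 1) : ℕ) : ℝ) * (-(1:ℝ)/(k:ℝ)) = -(((k - 1 : ℕ) : ℝ)) := by
      push_cast [Nat.cast_sub hk]
      field_simp
    rw [hexp, Real.rpow_neg (by norm_num), Real.rpow_natCast, inv_pow]
  rw [h8] at h7
  exact h7

private lemma normval (hp2 : p ≤ 2)
    (H : ℕ → ℕ → ℕ → ℝ) (x : ℕ → lp (fun _ : ℕ => ℝ) p)
    (hx : ∀ k : ℕ, 0 < k → ∀ j : ℕ,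
      2 ^ (k * (k - 1)) ≤ j → j ≤ 2 * 2 ^ (k * (k - 1)) - 1 →
      x j = ((2 ^ (k * (k - 1)) : ℝ) ^ (-(1 / 2 + 1 / p.toReal + 1 / (k : ℝ)))) •
        ∑ s ∈ Finset.Icc 1 (2 ^ (k * (k - 1))),
          H k (j - 2 ^ (k * (k - 1)) + 1) s •
            lp.single p (2 ^ (k * (k - 1)) + s - 1) (1 : ℝ))
    (k : ℕ) (hk : 0 < k)
    (hH1 : ∀ r s : ℕ, 1 ≤ r → r ≤ 2 ^ (k * (k - 1)) → 1 ≤ s → s ≤ 2 ^ (k * (k - 1)) →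
      |H k r s| = 1)
    (j : ℕ) (hj1 : 2 ^ (k * (k - 1)) ≤ j) (hj2 : j ≤ 2 * 2 ^ (k * (k - 1)) - 1) :
    ‖x j‖ = ((2 ^ (k * (k - 1)) : ℝ)) ^ (-(1/2 + 1/(k:ℝ))) := by
  classical
  have hptop : p ≠ ∞ := ne_top_of_le_ne_top (by norm_num) hp2
  have hq1 : 1 ≤ p.toReal := by
    rw [← ENNReal.toReal_one]
    exact (ENNReal.toReal_le_toReal (by norm_num) hptop).2 Fact.out
  have hq0 : 0 < p.toReal := lt_of_lt_of_le one_pos hq1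
  set q := p.toReal with hqdef
  set J : ℕ := 2 ^ (k * (k - 1)) with hJ
  have hJ1 : 1 ≤ J := Nat.one_le_two_pow
  set Jr : ℝ := (2 ^ (k * (k - 1)) : ℝ) with hJrdef
  have hJrc : ((J : ℕ) : ℝ) = Jr := by rw [hJrdef, hJ]; push_cast; ring
  have hJr0 : (0:ℝ) < Jr := by positivity
  have hk0 : ((k:ℝ)) ≠ 0 := Nat.cast_ne_zero.2 hk.ne'
  set α : ℝ := 1/2 + 1/q + 1/(k:ℝ) with hα
  set c : ℝ := Jr ^ (-α) with hc
  have hc0 : 0 < c := Real.rpow_pos_of_pos hJr0 _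
  have hrep := rep p H x hx k hk {j} (by
    intro j' hj'
    rw [Finset.mem_singleton] at hj'
    subst hj'
    exact ⟨hj1, hj2⟩)
  rw [Finset.sum_singleton] at hrep
  have h1 : ‖x j‖ ^ q = ∑ s ∈ Finset.Icc 1 J,
      |c * ∑ j' ∈ ({j} : Finset ℕ), H k (j' - J + 1) s| ^ q := by
    rw [hrep]
    exact normsum p hq0 J _
  have hr : 1 ≤ j - J + 1 ∧ j - J + 1 ≤ J := by omega
  have h2 : ∀ s ∈ Finset.Icc 1 J,
      |c * ∑ j' ∈ ({j} : Finset ℕ), H k (j' - J + 1) s| ^ q = c ^ q := by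
    intro s hs
    rw [Finset.mem_Icc] at hs
    rw [Finset.sum_singleton, abs_mul, hH1 _ _ hr.1 hr.2 hs.1 hs.2, mul_one, abs_of_pos hc0]
  rw [Finset.sum_congr rfl h2, Finset.sum_const, nsmul_eq_mul, Nat.card_Icc,
    Nat.add_sub_cancel, hJrc] at h1
  have h3 : Jr * c ^ q = (Jr ^ (-(1/2 + 1/(k:ℝ)))) ^ q := by
    rw [hc]
    nth_rewrite 1 [← Real.rpow_one Jr]
    rw [← Real.rpow_mul hJr0.le, ← Real.rpow_add hJr0, ← Real.rpow_mul hJr0.le]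
    congr 1
    rw [hα]
    field_simp
    ring
  rw [h3] at h1
  exact Real.rpow_left_injOn hq0.ne' (norm_nonneg _)
    (Real.rpow_nonneg hJr0.le _) h1

private lemma divergence (hp2 : p ≤ 2)
    (H : ℕ → ℕ → ℕ → ℝ)
    (hH1 : ∀ k : ℕ, 0 < k → ∀ r s : ℕ,
      1 ≤ r → r ≤ 2 ^ (k * (k - 1)) → 1 ≤ s → s ≤ 2 ^ (k * (k - 1)) →
      |H k r s| = 1)
    (x : ℕ → lp (fun _ : ℕ => ℝ) p)
    (hx : ∀ k : ℕ, 0 < k → ∀ j : ℕ,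
      2 ^ (k * (k - 1)) ≤ j → j ≤ 2 * 2 ^ (k * (k - 1)) - 1 →
      x j = ((2 ^ (k * (k - 1)) : ℝ) ^ (-(1 / 2 + 1 / p.toReal + 1 / (k : ℝ)))) •
        ∑ s ∈ Finset.Icc 1 (2 ^ (k * (k - 1))),
          H k (j - 2 ^ (k * (k - 1)) + 1) s •
            lp.single p (2 ^ (k * (k - 1)) + s - 1) (1 : ℝ))
    (ε : ℝ) (hε : 0 < ε) : ¬ Summable (fun j : ℕ => ‖x j‖ ^ (2 - ε)) := by
  intro hS
  set f : ℕ → ℝ := fun j => ‖x j‖ ^ (2 - ε) with hf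
  have hf0 : ∀ j, 0 ≤ f j := fun j => Real.rpow_nonneg (norm_nonneg _) _
  set C : ℝ := ∑' j, f j with hC
  set k : ℕ := ⌈6/ε⌉₊ + ⌈C⌉₊ + 1 with hkdef
  have hk : 0 < k := by omega
  have hkr1 : (1:ℝ) ≤ (k:ℝ) := by exact_mod_cast hk
  have hk0 : ((k:ℝ)) ≠ 0 := by positivity
  have hk6 : 6 ≤ (k:ℝ) * ε := by
    have h1 : 6/ε ≤ (⌈6/ε⌉₊ : ℝ) := Nat.le_ceil _
    have h2 : (⌈6/ε⌉₊ : ℝ) ≤ (k:ℝ) := by exact_mod_cast (by omega : ⌈6/ε⌉₊ ≤ k)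
    have := le_trans h1 h2
    rw [div_le_iff₀ hε] at this
    linarith [this]
  have hkC : C < (k:ℝ) := by
    have h1 : C ≤ (⌈C⌉₊ : ℝ) := Nat.le_ceil _
    have h2 : (⌈C⌉₊ : ℝ) < (k:ℝ) := by exact_mod_cast (by omega : ⌈C⌉₊ < k)
    linarith
  set J : ℕ := 2 ^ (k * (k - 1)) with hJ
  have hJ1 : 1 ≤ J := Nat.one_le_two_pow
  set Jr : ℝ := (2 ^ (k * (k - 1)) : ℝ) with hJrdef
  have hJrc : ((J : ℕ) : ℝ) = Jr := by rw [hJrdef, hJ]; push_cast; ring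
  have hJr0 : (0:ℝ) < Jr := by positivity
  set β : ℝ := -(1/2 + 1/(k:ℝ)) with hβ
  -- value on the block
  have hval : ∀ j ∈ Finset.Icc J (2 * J - 1), f j = (Jr ^ β) ^ (2 - ε) := by
    intro j hj
    rw [Finset.mem_Icc] at hj
    rw [hf]
    dsimp only
    rw [normval p hp2 H x hx k hk (hH1 k hk) j hj.1 hj.2]
  -- the block sum
  have hblock : ∑ j ∈ Finset.Icc J (2 * J - 1), f j = Jr ^ (1 + β * (2 - ε)) := by
    rw [Finset.sum_congr rfl hval, Finset.sum_const, nsmul_eq_mul, Nat.card_Icc]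
    have hcard : (2 * J - 1 + 1 - J) = J := by omega
    rw [hcard, hJrc, ← Real.rpow_mul hJr0.le]
    nth_rewrite 1 [← Real.rpow_one Jr]
    rw [← Real.rpow_add hJr0]
  -- lower bound on the exponent
  have hexp : ((k - 1 : ℕ) : ℝ) ≤ ((k * (k - 1) : ℕ) : ℝ) * (1 + β * (2 - ε)) := by
    have hc1 : ((k - 1 : ℕ) : ℝ) = (k:ℝ) - 1 := by
      push_cast [Nat.cast_sub hk]; ring
    have hc2 : ((k * (k - 1) : ℕ) : ℝ) = (k:ℝ) * ((k:ℝ) - 1) := by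
      push_cast [Nat.cast_sub hk]; ring
    rw [hc1, hc2, hβ]
    have key : (k:ℝ) * ((k:ℝ) - 1) * (1 + (-(1/2 + 1/(k:ℝ))) * (2 - ε))
        = ((k:ℝ) - 1) * ((k:ℝ) * ε / 2 + ε - 2) := by
      field_simp
      ring
    rw [key]
    nlinarith [hk6, hkr1, hε]
  -- the block sum is large
  have hlarge : (k : ℝ) ≤ ∑ j ∈ Finset.Icc J (2 * J - 1), f j := by
    rw [hblock, hJrdef, ← Real.rpow_natCast (2:ℝ) (k * (k-1)),
      ← Real.rpow_mul (by norm_num : (0:ℝ) ≤ 2)]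
    calc (k:ℝ) ≤ ((2 ^ (k-1) : ℕ) : ℝ) := by exact_mod_cast two_pow_pred_ge k
      _ = (2:ℝ) ^ (((k - 1:ℕ)):ℝ) := by rw [Real.rpow_natCast]; push_cast; ring
      _ ≤ (2:ℝ) ^ (((k * (k - 1) : ℕ) : ℝ) * (1 + β * (2 - ε))) :=
          Real.rpow_le_rpow_of_exponent_le (by norm_num) hexp
  have hupper : ∑ j ∈ Finset.Icc J (2 * J - 1), f j ≤ C :=
    hS.sum_le_tsum _ (fun j _ => hf0 j)
  linarith


end

/-- **Macphail-type construction in the real space `ℓ_p` (Theorem 3.1, abstract form).**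
Let `p ∈ [1,2]` and `j_k = 2^{k(k-1)}`.  Given, for each `k`, a `j_k × j_k` real matrix
`H k` with unimodular entries and pairwise orthogonal rows, the sequence
`x⁽ʲ⁾ = j_k^{-(1/2+1/p+1/k)} ∑_{s=1}^{j_k} (H k)_{rs} e_{j_k+s-1}` (for
`j_k ≤ j ≤ 2j_k - 1`, `r = j - j_k + 1`, and `0` otherwise) is unconditionally
summable in `ℓ_p(ℝ)` while `∑_j ‖x⁽ʲ⁾‖^{2-ε} = ∞` for every `ε > 0`. -/
theorem macphail_construction_real
    (p : ℝ≥0∞) [Fact (1 ≤ p)] (hp2 : p ≤ 2)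
    (H : ℕ → ℕ → ℕ → ℝ)
    (hH1 : ∀ k : ℕ, 0 < k → ∀ r s : ℕ,
      1 ≤ r → r ≤ 2 ^ (k * (k - 1)) → 1 ≤ s → s ≤ 2 ^ (k * (k - 1)) →
      |H k r s| = 1)
    (hHorth : ∀ k : ℕ, 0 < k → ∀ r t : ℕ,
      1 ≤ r → r ≤ 2 ^ (k * (k - 1)) → 1 ≤ t → t ≤ 2 ^ (k * (k - 1)) →
      ∑ s ∈ Finset.Icc 1 (2 ^ (k * (k - 1))), H k r s * H k t s =
        if r = t then (2 ^ (k * (k - 1)) : ℝ) else 0)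
    (x : ℕ → lp (fun _ : ℕ => ℝ) p)
    (hx : ∀ k : ℕ, 0 < k → ∀ j : ℕ,
      2 ^ (k * (k - 1)) ≤ j → j ≤ 2 * 2 ^ (k * (k - 1)) - 1 →
      x j = ((2 ^ (k * (k - 1)) : ℝ) ^ (-(1 / 2 + 1 / p.toReal + 1 / (k : ℝ)))) •
        ∑ s ∈ Finset.Icc 1 (2 ^ (k * (k - 1))),
          H k (j - 2 ^ (k * (k - 1)) + 1) s •
            lp.single p (2 ^ (k * (k - 1)) + s - 1) (1 : ℝ))
    (hx0 : ∀ j : ℕ,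
      (¬ ∃ k : ℕ, 0 < k ∧ 2 ^ (k * (k - 1)) ≤ j ∧ j ≤ 2 * 2 ^ (k * (k - 1)) - 1) →
      x j = 0) :
    Summable x ∧ ∀ ε : ℝ, 0 < ε → ¬ Summable (fun j : ℕ => ‖x j‖ ^ (2 - ε)) := by

  classical
  constructor
  · -- summability
    rw [summable_iff_vanishing_norm]
    intro ε hε
    obtain ⟨K₀, hK₀⟩ := exists_pow_lt_of_lt_one (show (0:ℝ) < ε/4 by linarith)
      (by norm_num : (2:ℝ)⁻¹ < 1)
    set K := K₀ + 1 with hKdef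
    have hK1 : 1 ≤ K := by omega
    have hKpow : ((2:ℝ)⁻¹) ^ K < ε/4 :=
      lt_of_le_of_lt (pow_le_pow_of_le_one (by norm_num) (by norm_num) (by omega)) hK₀
    refine ⟨Finset.range (2 ^ (K * (K - 1))), fun t htdis => ?_⟩
    set P : ℕ → Prop :=
      fun j => ∃ k : ℕ, 0 < k ∧ 2 ^ (k * (k - 1)) ≤ j ∧ j ≤ 2 * 2 ^ (k * (k - 1)) - 1
      with hPdef
    set t' := t.filter P with ht'def
    have hsum_eq : ∑ j ∈ t', x j = ∑ j ∈ t, x j := by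
      apply Finset.sum_filter_of_ne
      intro j hj hxj
      by_contra hP
      exact hxj (hx0 j hP)
    set kOf : ℕ → ℕ := fun j => if h : P j then h.choose else 0 with hkOfdef
    have hkOf : ∀ j, (hP : P j) → 0 < kOf j ∧ 2 ^ (kOf j * (kOf j - 1)) ≤ j ∧
        j ≤ 2 * 2 ^ (kOf j * (kOf j - 1)) - 1 := by
      intro j hP
      rw [hkOfdef]
      simp only [dif_pos hP]
      exact hP.choose_spec
    have htK : ∀ j ∈ t, 2 ^ (K * (K - 1)) ≤ j := by
      intro j hj
      by_contra h
      exact (Finset.disjoint_left.1 htdis hj) (Finset.mem_range.2 (by omega))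
    have hkOfK : ∀ j ∈ t', K ≤ kOf j := by
      intro j hj
      rw [ht'def, Finset.mem_filter] at hj
      obtain ⟨hjt, hjP⟩ := hj
      obtain ⟨hpos, hlow, hhigh⟩ := hkOf j hjP
      by_contra hlt
      push_neg at hlt
      have h1 := gap (kOf j) hpos
      have h2 : (2:ℕ) ^ ((kOf j + 1) * ((kOf j + 1) - 1)) ≤ 2 ^ (K * (K - 1)) :=
        Jmono (by omega)
      have h3 := htK j hjt
      omega
    have himageK : ∀ k ∈ t'.image kOf, K ≤ k := by
      intro k hk
      obtain ⟨j, hj, rfl⟩ := Finset.mem_image.1 hk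
      exact hkOfK j hj
    have hfib := Finset.sum_fiberwise_of_maps_to (s := t') (t := t'.image kOf) (g := kOf)
      (fun j hj => Finset.mem_image_of_mem kOf hj) x
    rw [← hsum_eq, ← hfib]
    calc ‖∑ k ∈ t'.image kOf, ∑ j ∈ t'.filter (fun j => kOf j = k), x j‖
        ≤ ∑ k ∈ t'.image kOf, ‖∑ j ∈ t'.filter (fun j => kOf j = k), x j‖ :=
          norm_sum_le _ _
      _ ≤ ∑ k ∈ t'.image kOf, ((2:ℝ)⁻¹) ^ (k - 1) := by
          refine Finset.sum_le_sum fun k hk => ?_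
          obtain ⟨j₀, hj₀, hkeq⟩ := Finset.mem_image.1 hk
          have hk0 : 0 < k := by
            rw [← hkeq]
            exact (hkOf j₀ ((Finset.mem_filter.1 hj₀).2)).1
          refine keybound p hp2 H x hx k hk0
            (fun r s hr1 hr2 hs1 hs2 => hHorth k hk0 r s hr1 hr2 hs1 hs2) _ ?_
          intro j hj
          rw [Finset.mem_filter] at hj
          have hspec := hkOf j ((Finset.mem_filter.1 hj.1).2)
          rw [hj.2] at hspec
          exact ⟨hspec.2.1, hspec.2.2⟩
      _ ≤ 2 * ((2:ℝ)⁻¹) ^ (K - 1) := by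
          have hinj : ∀ a ∈ t'.image kOf, ∀ b ∈ t'.image kOf, a - 1 = b - 1 → a = b := by
            intro a ha b hb h
            have := himageK a ha
            have := himageK b hb
            omega
          have h1 : ∑ k ∈ t'.image kOf, ((2:ℝ)⁻¹) ^ (k - 1)
              = ∑ m ∈ (t'.image kOf).image (· - 1), ((2:ℝ)⁻¹) ^ m :=
            (Finset.sum_image hinj).symm
          rw [h1]
          apply geom_tail
          intro m hm
          obtain ⟨k, hk, rfl⟩ := Finset.mem_image.1 hm
          have := himageK k hk
          omega
      _ < ε := by
          have hKs : K - 1 + 1 = K := by omega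
          have he : ((2:ℝ)⁻¹) ^ K = ((2:ℝ)⁻¹) ^ (K - 1) * 2⁻¹ := by
            rw [← pow_succ, hKs]
          have he2 : ((2:ℝ)⁻¹) ^ (K - 1) = 2 * ((2:ℝ)⁻¹) ^ K := by
            rw [he]; ring
          rw [he2]
          linarith
  · intro ε hε
    exact divergence p hp2 H hH1 x hx ε hε
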